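/- Let ε(ξ) = φ(ξ)/Φ(ξ) be the inverse Mills ratio. Then lim_{ξ→−∞} (ε(ξ) + ξ) = 0. -/

import Mathlib

open MeasureTheory Real Filter Set

noncomputable def stdNormalPDF (x : ℝ) : ℝ := Real.exp (-x ^ 2 / 2) / Real.sqrt (2 * Real.pi)

noncomputable def stdNormalCDF (x : ℝ) : ℝ := ∫ t in Set.Iic x, stdNormalPDF t

lemma pdf_pos (x : ℝ) : 0 < stdNormalPDF x := by
  unfold stdNormalPDF
  have := Real.pi_pos
  positivity

lemma pdf_eq : stdNormalPDF = fun x => Real.exp (-2⁻¹ * x ^ 2) * (Real.sqrt (2 * Real.pi))⁻¹ := by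
  funext x
  rw [stdNormalPDF, div_eq_mul_inv]
  ring_nf

lemma pdf_integrable : Integrable stdNormalPDF := by
  rw [pdf_eq]
  exact (integrable_exp_neg_mul_sq (by norm_num : (0:ℝ) < 2⁻¹)).mul_const _

lemma pdf_continuous : Continuous stdNormalPDF := by
  unfold stdNormalPDF
  continuity

lemma pdf_tendsto : Tendsto stdNormalPDF atBot (nhds 0) := by
  unfold stdNormalPDF
  have h1 : Tendsto (fun x : ℝ => -x ^ 2 / 2) atBot atBot := by
    apply Tendsto.atBot_div_const (by norm_num : (0:ℝ) < 2)
    apply tendsto_neg_atTop_atBot.comp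
    have : Tendsto (fun x : ℝ => |x| ^ 2) atBot atTop :=
      (tendsto_pow_atTop two_ne_zero).comp tendsto_abs_atBot_atTop
    simpa [sq_abs] using this
  have := (Real.tendsto_exp_atBot.comp h1).div_const (Real.sqrt (2 * Real.pi))
  simpa using this

lemma pdf_hasDerivAt (x : ℝ) : HasDerivAt stdNormalPDF (-x * stdNormalPDF x) x := by
  have h1 : HasDerivAt (fun x : ℝ => -x ^ 2 / 2) (-x) x := by
    have := ((hasDerivAt_pow 2 x).neg).div_const 2
    refine this.congr_deriv ?_
    ring
  have h2 := (h1.exp).div_const (Real.sqrt (2 * Real.pi))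
  refine h2.congr_deriv ?_
  unfold stdNormalPDF
  ring

lemma mul_pdf_integrableOn (x : ℝ) :
    IntegrableOn (fun t => -t * stdNormalPDF t) (Set.Iic x) := by
  apply Integrable.integrableOn
  have h := ((integrable_mul_exp_neg_mul_sq (by norm_num : (0:ℝ) < 2⁻¹)).mul_const
    ((Real.sqrt (2 * Real.pi))⁻¹)).neg
  have he : (fun t => -t * stdNormalPDF t)
      = fun t => -(t * Real.exp (-2⁻¹ * t ^ 2) * (Real.sqrt (2 * Real.pi))⁻¹) := by
    funext t
    rw [pdf_eq]
    ring
  rw [he]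
  exact h

lemma key1 (x : ℝ) : ∫ t in Set.Iic x, -t * stdNormalPDF t = stdNormalPDF x := by
  have := integral_Iic_of_hasDerivAt_of_tendsto' (a := x)
    (f := stdNormalPDF) (f' := fun t => -t * stdNormalPDF t)
    (fun t _ => pdf_hasDerivAt t) (mul_pdf_integrableOn x) pdf_tendsto
  simpa using this

noncomputable def gfun (t : ℝ) : ℝ := -t / (t ^ 2 + 1) * stdNormalPDF t

noncomputable def gderiv (t : ℝ) : ℝ :=
  (t ^ 4 + 2 * t ^ 2 - 1) / (t ^ 2 + 1) ^ 2 * stdNormalPDF t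

lemma gfun_hasDerivAt (t : ℝ) : HasDerivAt gfun (gderiv t) t := by
  have hden : (t ^ 2 + 1) ≠ 0 := by positivity
  have h1 : HasDerivAt (fun t : ℝ => -t / (t ^ 2 + 1))
      ((t ^ 2 - 1) / (t ^ 2 + 1) ^ 2) t := by
    have hn : HasDerivAt (fun t : ℝ => -t) (-1) t := (hasDerivAt_id t).neg
    have hd : HasDerivAt (fun t : ℝ => t ^ 2 + 1) (2 * t) t := by
      simpa using (hasDerivAt_pow 2 t).add_const 1
    have := hn.div hd hden
    refine this.congr_deriv ?_
    field_simp
    ring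
  have := h1.mul (pdf_hasDerivAt t)
  refine this.congr_deriv ?_
  unfold gderiv
  field_simp
  ring

lemma gderiv_le (t : ℝ) : gderiv t ≤ stdNormalPDF t := by
  unfold gderiv
  apply mul_le_of_le_one_left (pdf_pos t).le
  rw [div_le_one (by positivity)]
  nlinarith [sq_nonneg t]

lemma gderiv_abs_le (t : ℝ) : |gderiv t| ≤ stdNormalPDF t := by
  unfold gderiv
  rw [abs_mul, abs_of_pos (pdf_pos t)]
  apply mul_le_of_le_one_left (pdf_pos t).le
  rw [abs_div, abs_of_pos (show (0:ℝ) < (t ^ 2 + 1) ^ 2 by positivity),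
    div_le_one (by positivity)]
  rw [abs_le]
  constructor <;> nlinarith [sq_nonneg t, sq_nonneg (t ^ 2)]

lemma gderiv_continuous : Continuous gderiv := by
  unfold gderiv
  exact (continuous_id.pow 4 |>.add ((continuous_const.mul (continuous_id.pow 2))) |>.sub
    continuous_const |>.div ((continuous_id.pow 2 |>.add continuous_const).pow 2)
    (fun t => by show ((t:ℝ) ^ 2 + 1) ^ 2 ≠ 0; positivity)).mul pdf_continuous

lemma gderiv_integrableOn (x : ℝ) : IntegrableOn gderiv (Set.Iic x) := by
  apply Integrable.mono (pdf_integrable.integrableOn (s := Set.Iic x))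
    gderiv_continuous.aestronglyMeasurable.restrict
  filter_upwards with t
  rw [Real.norm_eq_abs, Real.norm_eq_abs, abs_of_pos (pdf_pos t)]
  exact gderiv_abs_le t

lemma gfun_tendsto : Tendsto gfun atBot (nhds 0) := by
  apply tendsto_of_tendsto_of_tendsto_of_le_of_le' tendsto_const_nhds pdf_tendsto
  · filter_upwards [eventually_le_atBot (0:ℝ)] with t ht
    unfold gfun
    exact mul_nonneg (div_nonneg (by linarith) (by positivity)) (pdf_pos t).le
  · filter_upwards with t
    unfold gfun
    apply mul_le_of_le_one_left (pdf_pos t).le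
    rw [div_le_one (by positivity)]
    nlinarith [sq_nonneg (t + 1)]

lemma key2 (x : ℝ) : ∫ t in Set.Iic x, gderiv t = gfun x := by
  have := integral_Iic_of_hasDerivAt_of_tendsto' (a := x)
    (f := gfun) (f' := gderiv)
    (fun t _ => gfun_hasDerivAt t) (gderiv_integrableOn x) gfun_tendsto
  simpa using this

lemma cdf_lb (x : ℝ) : -x / (x ^ 2 + 1) * stdNormalPDF x ≤ stdNormalCDF x := by
  rw [show -x / (x ^ 2 + 1) * stdNormalPDF x = gfun x from rfl, ← key2 x, stdNormalCDF]
  exact setIntegral_mono_on (gderiv_integrableOn x) pdf_integrable.integrableOn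
    measurableSet_Iic (fun t _ => gderiv_le t)

lemma cdf_ub {x : ℝ} (hx : x < 0) : -x * stdNormalCDF x ≤ stdNormalPDF x := by
  rw [← key1 x, stdNormalCDF, ← integral_const_mul]
  apply setIntegral_mono_on (pdf_integrable.integrableOn.const_mul _)
    (mul_pdf_integrableOn x) measurableSet_Iic
  intro t ht
  exact mul_le_mul_of_nonneg_right (by simpa using ht) (pdf_pos t).le

/-- `lim_{ξ→−∞} (φ(ξ)/Φ(ξ) + ξ) = 0`. -/
theorem stmt_3 :
    Tendsto (fun ξ : ℝ => stdNormalPDF ξ / stdNormalCDF ξ + ξ) atBot (nhds 0) := by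
  have hb : Tendsto (fun x : ℝ => -x⁻¹) atBot (nhds 0) := by
    have h := tendsto_inv_atTop_zero.comp (tendsto_neg_atBot_atTop : Tendsto (Neg.neg : ℝ → ℝ) atBot atTop)
    have he : (fun x : ℝ => -x⁻¹) = (fun r : ℝ => r⁻¹) ∘ Neg.neg := by
      funext x
      simp [Function.comp, inv_neg]
    rw [he]
    exact h
  apply tendsto_of_tendsto_of_tendsto_of_le_of_le' tendsto_const_nhds hb
  · filter_upwards [eventually_lt_atBot (0:ℝ)] with x hx
    have hP := pdf_pos x
    have hlb := cdf_lb x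
    have hub := cdf_ub hx
    have hC : 0 < stdNormalCDF x := by
      have : 0 < -x / (x ^ 2 + 1) * stdNormalPDF x := by
        apply mul_pos (div_pos (by linarith) (by positivity)) hP
      linarith
    have h1 : -x ≤ stdNormalPDF x / stdNormalCDF x := by
      rw [le_div_iff₀ hC]
      linarith
    linarith
  · filter_upwards [eventually_lt_atBot (0:ℝ)] with x hx
    have hP := pdf_pos x
    have hlb := cdf_lb x
    have hC : 0 < stdNormalCDF x := by
      have : 0 < -x / (x ^ 2 + 1) * stdNormalPDF x := by
        apply mul_pos (div_pos (by linarith) (by positivity)) hP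
      linarith
    have hlb' : -x * stdNormalPDF x ≤ (x ^ 2 + 1) * stdNormalCDF x := by
      have h := mul_le_mul_of_nonneg_left hlb (show (0:ℝ) ≤ x ^ 2 + 1 by positivity)
      calc -x * stdNormalPDF x = (x ^ 2 + 1) * (-x / (x ^ 2 + 1) * stdNormalPDF x) := by
            field_simp
        _ ≤ (x ^ 2 + 1) * stdNormalCDF x := h
    have h2 : stdNormalPDF x / stdNormalCDF x ≤ (x ^ 2 + 1) / (-x) := by
      rw [div_le_div_iff₀ hC (by linarith : (0:ℝ) < -x)]
      nlinarith
    have hx0 : x ≠ 0 := ne_of_lt hx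
    have h3 : (x ^ 2 + 1) / (-x) + x = -x⁻¹ := by
      rw [div_add' _ _ _ (neg_ne_zero.2 hx0), show x ^ 2 + 1 + x * -x = 1 by ring,
        one_div, inv_neg]
    linarith
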